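/- The A-homotopy fundamental group of the 5-cycle is infinite cyclic: the map n ↦ [γₙ] is a group isomorphism from (ℤ, +) onto (B₁(C₅,[0])/∼, ·). -/

import Mathlib

/-- A graph homomorphism in the A-homotopy sense: adjacent vertices map to
equal or adjacent vertices. -/
def IsGraphHom {V W : Type*} (G : SimpleGraph V) (H : SimpleGraph W) (f : V → W) : Prop :=
  ∀ ⦃u v : V⦄, G.Adj u v → f u = f v ∨ H.Adj (f u) (f v)

/-- The infinite path graph `I_∞` on `ℤ`. -/
def pathGraphZ : SimpleGraph ℤ where
  Adj i j := i ≠ j ∧ (j = i + 1 ∨ i = j + 1)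
  symm := ⟨fun i j h => ⟨h.1.symm, h.2.symm⟩⟩
  loopless := ⟨fun i h => h.1 rfl⟩

/-- The Cartesian (box) product `I_∞ □ I_∞` on `ℤ × ℤ`. -/
def gridGraphZ : SimpleGraph (ℤ × ℤ) where
  Adj p q := p ≠ q ∧ ((p.1 = q.1 ∧ pathGraphZ.Adj p.2 q.2) ∨ (p.2 = q.2 ∧ pathGraphZ.Adj p.1 q.1))
  symm := ⟨fun p q h =>
    ⟨h.1.symm, h.2.imp (fun hc => ⟨hc.1.symm, hc.2.symm⟩) (fun hc => ⟨hc.1.symm, hc.2.symm⟩)⟩⟩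
  loopless := ⟨fun p h => h.1 rfl⟩

/-- The Cartesian product `G □ I_∞` on `V × ℤ`. -/
def boxZ {V : Type*} (G : SimpleGraph V) : SimpleGraph (V × ℤ) where
  Adj p q := p ≠ q ∧ ((p.1 = q.1 ∧ pathGraphZ.Adj p.2 q.2) ∨ (p.2 = q.2 ∧ G.Adj p.1 q.1))
  symm := ⟨fun p q h =>
    ⟨h.1.symm, h.2.imp (fun hc => ⟨hc.1.symm, hc.2.symm⟩) (fun hc => ⟨hc.1.symm, hc.2.symm⟩)⟩⟩
  loopless := ⟨fun p h => h.1 rfl⟩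

/-- The cycle graph `C_n` on `ZMod n`. -/
def cycleGraph (n : ℕ) : SimpleGraph (ZMod n) where
  Adj a b := a ≠ b ∧ (a = b + 1 ∨ b = a + 1)
  symm := ⟨fun a b h => ⟨h.1.symm, h.2.symm⟩⟩
  loopless := ⟨fun a h => h.1 rfl⟩

/-- The one-vertex graph `*`. -/
def oneVertexGraph : SimpleGraph Unit := ⊥

/-- `f` is constant on integers `≤ m`. -/
def IsStabNegAt {V : Type*} (f : ℤ → V) (m : ℤ) : Prop := ∀ i ≤ m, f i = f m

/-- `f` is constant on integers `≥ m`. -/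
def IsStabPosAt {V : Type*} (f : ℤ → V) (m : ℤ) : Prop := ∀ i, m ≤ i → f i = f m

/-- `m` is the greatest integer below which `f` is constant: `m = m₀(f,-1)`. -/
def M0Neg {V : Type*} (f : ℤ → V) (m : ℤ) : Prop :=
  IsStabNegAt f m ∧ ∀ m', IsStabNegAt f m' → m' ≤ m

/-- `m` is the least integer above which `f` is constant: `m = m₀(f,+1)`. -/
def M0Pos {V : Type*} (f : ℤ → V) (m : ℤ) : Prop :=
  IsStabPosAt f m ∧ ∀ m', IsStabPosAt f m' → m ≤ m'

/-- A stable graph homomorphism `I_∞ → G`. -/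
def StableHomZ {V : Type*} (G : SimpleGraph V) (f : ℤ → V) : Prop :=
  IsGraphHom pathGraphZ G f ∧ (∃ m, IsStabNegAt f m) ∧ (∃ m, IsStabPosAt f m)

/-- The A-homotopy relation of Babson et al. on stable maps `I_∞ → G`:
`f` and `g` share their end values `vneg`, `vpos`, and there is a stable graph
homomorphism `H : I_∞² → G` stabilizing in the first axis to the constant end
values and to `f` (resp. `g`) in the negative (resp. positive) second direction. -/
def AHomotopicZ {V : Type*} (G : SimpleGraph V) (f g : ℤ → V) : Prop :=
  ∃ (vneg vpos : V) (H : ℤ × ℤ → V), IsGraphHom gridGraphZ G H ∧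
    (∃ m, ∀ i ≤ m, f i = vneg ∧ g i = vneg) ∧
    (∃ m, ∀ i, m ≤ i → f i = vpos ∧ g i = vpos) ∧
    (∃ m, ∀ a ≤ m, ∀ j : ℤ, H (a, j) = vneg) ∧
    (∃ m, ∀ a, m ≤ a → ∀ j : ℤ, H (a, j) = vpos) ∧
    (∃ m, ∀ j ≤ m, ∀ a : ℤ, H (a, j) = f a) ∧
    (∃ m, ∀ j, m ≤ j → ∀ a : ℤ, H (a, j) = g a)

/-- A-homotopy of graph homomorphisms `G → H` via a finite cylinder `G □ I_n`
(encoded as a homotopy on `G □ I_∞` that is constantly `f` for times `≤ 0` and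
constantly `g` for times `≥ n`). -/
def AHomotopicFin {V W : Type*} (G : SimpleGraph V) (H : SimpleGraph W) (f g : V → W) : Prop :=
  ∃ (n : ℕ) (Φ : V × ℤ → W), IsGraphHom (boxZ G) H Φ ∧
    (∀ v : V, ∀ i ≤ (0 : ℤ), Φ (v, i) = f v) ∧
    (∀ v : V, ∀ i : ℤ, (n : ℤ) ≤ i → Φ (v, i) = g v)

/-- Based A-homotopy: as `AHomotopicFin`, additionally fixing the base vertex
`v0 ↦ w0` at all times. -/
def AHomotopicBased {V W : Type*} (G : SimpleGraph V) (H : SimpleGraph W)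
    (v0 : V) (w0 : W) (f g : V → W) : Prop :=
  ∃ (n : ℕ) (Φ : V × ℤ → W), IsGraphHom (boxZ G) H Φ ∧
    (∀ v : V, ∀ i ≤ (0 : ℤ), Φ (v, i) = f v) ∧
    (∀ v : V, ∀ i : ℤ, (n : ℤ) ≤ i → Φ (v, i) = g v) ∧
    (∀ i : ℤ, Φ (v0, i) = w0)

/-- Concatenation `f · g`, where `mf = m₀(f,-1)` and `mg = m₀(g,+1)`. -/
def concatZ {V : Type*} (f g : ℤ → V) (mf mg : ℤ) : ℤ → V :=
  fun a => if 0 ≤ a then f (a + mf) else g (a + mg)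

/-- The closed neighborhood `N[v]`. -/
def nbhd {V : Type*} (G : SimpleGraph V) (v : V) : Set V := {u | u = v ∨ G.Adj u v}

/-- A covering graph map: a surjective local isomorphism. -/
def IsCoveringMap' {V W : Type*} (Gt : SimpleGraph V) (G : SimpleGraph W) (p : V → W) : Prop :=
  IsGraphHom Gt G p ∧ Function.Surjective p ∧
    ∀ w : V, Set.BijOn p (nbhd Gt w) (nbhd G (p w))

/-- A based loop in `B₁(G, x₀)`: a graph homomorphism `I_∞ → G` equal to `x₀`
outside a finite region. -/
def IsLoopAt {V : Type*} (G : SimpleGraph V) (x0 : V) (γ : ℤ → V) : Prop :=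
  IsGraphHom pathGraphZ G γ ∧ ∃ a b : ℤ, ∀ i : ℤ, (i < a ∨ b < i) → γ i = x0

/-- The 5-cycle. -/
def C5 : SimpleGraph (ZMod 5) := cycleGraph 5

/-- The covering map `p₅ : I_∞ → C₅`, reduction mod 5. -/
def p5 : ℤ → ZMod 5 := fun i => (i : ZMod 5)

/-- The standard loop `γ_n` winding `n` times around `C₅`. -/
def gammaC5 (n : ℤ) : ℤ → ZMod 5 := fun i =>
  if 0 ≤ n then (if i ≤ 0 then 0 else if i ≤ 5 * n then (i : ZMod 5) else 0)
  else (if i ≤ 0 then 0 else if i ≤ -(5 * n) then ((-i : ℤ) : ZMod 5) else 0)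

/-- The standard lift `γ̃_n : I_∞ → I_∞` of `γ_n`, starting at `0` and ending at `5n`. -/
def gammaLift (n : ℤ) : ℤ → ℤ := fun i =>
  if i ≤ 0 then 0 else if i ≤ 5 * |n| then (if 0 ≤ n then i else -i) else 5 * n
section Aux

/-- basic Lipschitz predicate on integer sequences -/
def Lip (F : ℤ → ℤ) : Prop := ∀ a : ℤ, F (a + 1) ≤ F a + 1 ∧ F a ≤ F (a + 1) + 1

lemma lip_dist {F : ℤ → ℤ} (hF : Lip F) : ∀ x y : ℤ, x ≤ y →
    F y - F x ≤ y - x ∧ F x - F y ≤ y - x := by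
  intro x y hxy
  refine Int.le_induction (motive := fun y _ => F y - F x ≤ y - x ∧ F x - F y ≤ y - x)
    ?_ ?_ y hxy
  · omega
  · intro k hk ih
    have := hF k; omega

lemma cast_eq_iff_dvd (x y : ℤ) : ((x : ZMod 5) = (y : ZMod 5)) ↔ (5:ℤ) ∣ y - x := by
  rw [ZMod.intCast_eq_intCast_iff, Int.modEq_iff_dvd]
  norm_num

lemma close5 {x y : ℤ} (h1 : x ≤ y + 1) (h2 : y ≤ x + 1) :
    (x : ZMod 5) = (y : ZMod 5) ∨ C5.Adj (x : ZMod 5) (y : ZMod 5) := by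
  rcases (by omega : y = x ∨ y = x + 1 ∨ x = y + 1) with h | h | h
  · left; rw [h]
  · right
    refine ⟨?_, Or.inr ?_⟩
    · intro hc
      rw [cast_eq_iff_dvd] at hc
      omega
    · rw [h]; push_cast; ring
  · right
    refine ⟨?_, Or.inl ?_⟩
    · intro hc
      rw [cast_eq_iff_dvd] at hc
      omega
    · rw [h]; push_cast; ring

/-- step function for the covering p5 -/
def step5 (x y : ZMod 5) : ℤ := if y = x + 1 then 1 else if x = y + 1 then -1 else 0

lemma step5_self (x : ZMod 5) : step5 x x = 0 := by
  unfold step5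
  have : x ≠ x + 1 := by
    intro h; exact (by decide : (1:ZMod 5) ≠ 0) (by rwa [left_eq_add] at h)
  simp [this]

lemma step5_bound (x y : ZMod 5) : -1 ≤ step5 x y ∧ step5 x y ≤ 1 := by
  unfold step5; split_ifs <;> omega

lemma step5_cast {x y : ZMod 5} (h : x = y ∨ C5.Adj x y) :
    ((step5 x y : ℤ) : ZMod 5) = y - x := by
  rcases h with h | ⟨hne, h | h⟩
  · subst h; rw [step5_self]; simp
  · -- x = y + 1
    have h1 : ¬ (y = x + 1) := by
      intro hc
      have h2 : x = x + (1 + 1) := by rw [← add_assoc, ← hc]; exact h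
      have h3 := left_eq_add.mp h2
      exact absurd h3 (by decide)
    unfold step5
    rw [if_neg h1, if_pos h, h]
    push_cast; ring
  · unfold step5
    rw [if_pos h, h]; push_cast; ring

lemma Ico_succ_insert {A a : ℤ} (h : A ≤ a) :
    Finset.Ico A (a + 1) = insert a (Finset.Ico A a) := by
  ext x; simp only [Finset.mem_Ico, Finset.mem_insert]; omega

/-- the canonical lift based at A with value 0 -/
noncomputable def liftL (f : ℤ → ZMod 5) (A : ℤ) (a : ℤ) : ℤ :=
  (∑ i ∈ Finset.Ico A a, step5 (f i) (f (i + 1)))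
    - (∑ i ∈ Finset.Ico a A, step5 (f i) (f (i + 1)))

lemma liftL_base (f : ℤ → ZMod 5) (A : ℤ) : liftL f A A = 0 := by
  simp [liftL]

lemma liftL_succ (f : ℤ → ZMod 5) (A a : ℤ) :
    liftL f A (a + 1) = liftL f A a + step5 (f a) (f (a + 1)) := by
  unfold liftL
  rcases le_or_gt A a with h | h
  · rw [Ico_succ_insert h, Finset.sum_insert (by simp),
      Finset.Ico_eq_empty (by omega : ¬ (a:ℤ) < A),
      Finset.Ico_eq_empty (by omega : ¬ (a+1:ℤ) < A)]
    simp only [Finset.sum_empty]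
    ring
  · have ha : a + 1 ≤ A := h
    rw [Finset.Ico_eq_empty (by omega : ¬ (A:ℤ) < a),
      Finset.Ico_eq_empty (by omega : ¬ (A:ℤ) < a + 1)]
    have : Finset.Ico a A = insert a (Finset.Ico (a+1) A) := by
      ext x; simp only [Finset.mem_Ico, Finset.mem_insert]; omega
    rw [this, Finset.sum_insert (by simp)]
    simp only [Finset.sum_empty]
    ring

lemma liftL_lip (f : ℤ → ZMod 5) (A : ℤ) : Lip (liftL f A) := by
  intro a
  rw [liftL_succ]
  have := step5_bound (f a) (f (a + 1))
  omega

lemma liftL_pred (f : ℤ → ZMod 5) (A a : ℤ) :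
    liftL f A a = liftL f A (a - 1) + step5 (f (a-1)) (f a) := by
  have h := liftL_succ f A (a - 1)
  have e : a - 1 + 1 = a := by omega
  rw [e] at h
  exact h

lemma liftL_cast {f : ℤ → ZMod 5} (hf : IsGraphHom pathGraphZ C5 f) (A : ℤ) :
    ∀ a : ℤ, ((liftL f A a : ℤ) : ZMod 5) = f a - f A := by
  have hstep : ∀ a : ℤ, ((step5 (f a) (f (a+1)) : ℤ) : ZMod 5) = f (a+1) - f a := by
    intro a
    exact step5_cast (hf (u := a) (v := a + 1) ⟨by omega, Or.inl rfl⟩)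
  intro a
  induction a using Int.inductionOn' (b := A) with
  | zero => rw [liftL_base]; simp
  | succ k _ ih => rw [liftL_succ]; push_cast; rw [ih, hstep]; ring
  | pred k _ ih =>
      have h := liftL_pred f A k
      have e : k - 1 + 1 = k := by omega
      have hs := hstep (k - 1)
      rw [e] at hs
      rw [h] at ih
      push_cast at ih
      rw [hs] at ih
      have : ((liftL f A (k-1) : ℤ) : ZMod 5) = f k - f A - (f k - f (k-1)) := by
        rw [← ih]; ring
      rw [this]; ring

lemma liftL_flat_below {f : ℤ → ZMod 5} {A m : ℤ} (hm : ∀ i ≤ m, f i = f m) (hAm : A ≤ m) :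
    ∀ i ≤ A, liftL f A i = 0 := by
  intro i hi
  refine Int.le_induction_down (motive := fun i _ => liftL f A i = 0) ?_ ?_ i hi
  · exact liftL_base f A
  · intro k hk ih
    have h1 := liftL_pred f A k
    have : step5 (f (k-1)) (f k) = 0 := by
      rw [hm (k-1) (by omega), hm k (by omega), step5_self]
    omega

lemma liftL_flat_above {f : ℤ → ZMod 5} {A m : ℤ} (hm : ∀ i, m ≤ i → f i = f m) :
    ∀ i, m ≤ i → liftL f A i = liftL f A m := by
  intro i hi
  refine Int.le_induction (motive := fun i _ => liftL f A i = liftL f A m) ?_ ?_ i hi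
  · rfl
  · intro k hk ih
    rw [liftL_succ, hm k hk, hm (k+1) (by omega), step5_self, ih]
    ring

/-- uniqueness of Lipschitz lifts -/
lemma lift_unique {F G : ℤ → ℤ} (hF : Lip F) (hG : Lip G) (A : ℤ) (hA : F A = G A)
    (hmod : ∀ a, (5:ℤ) ∣ (G a - F a)) : ∀ a, F a = G a := by
  intro a
  induction a using Int.inductionOn' (b := A) with
  | zero => exact hA
  | succ k _ ih =>
      have h1 := hF k; have h2 := hG k; have h3 := hmod (k + 1)
      omega
  | pred k _ ih =>
      have h1 := hF (k - 1); have h2 := hG (k - 1); have h3 := hmod (k - 1)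
      have e : k - 1 + 1 = k := by omega
      rw [e] at h1 h2
      omega

/-- close lifts stay close -/
lemma lift_close {F G : ℤ → ℤ} (hF : Lip F) (hG : Lip G) (A : ℤ) (hA : F A = G A)
    (hclose : ∀ a, ∃ e : ℤ, -1 ≤ e ∧ e ≤ 1 ∧ (5:ℤ) ∣ (G a - F a - e)) :
    ∀ a, -1 ≤ G a - F a ∧ G a - F a ≤ 1 := by
  intro a
  induction a using Int.inductionOn' (b := A) with
  | zero => omega
  | succ k _ ih =>
      have h1 := hF k; have h2 := hG k
      obtain ⟨e, he1, he2, he3⟩ := hclose (k + 1)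
      omega
  | pred k _ ih =>
      have h1 := hF (k - 1); have h2 := hG (k - 1)
      have e0 : k - 1 + 1 = k := by omega
      rw [e0] at h1 h2
      obtain ⟨e, he1, he2, he3⟩ := hclose (k - 1)
      omega

end Aux
section Gamma

lemma cast5 (k : ℤ) : ((5 * k : ℤ) : ZMod 5) = 0 := by
  have h := (cast_eq_iff_dvd (5*k) 0).mpr ⟨-k, by ring⟩
  simpa using h

lemma gammaLift_lip (k : ℤ) : Lip (gammaLift k) := by
  intro a
  rcases le_or_gt 0 k with hk | hk
  · simp only [gammaLift, abs_of_nonneg hk]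
    split_ifs <;> omega
  · simp only [gammaLift, abs_of_neg hk]
    split_ifs <;> omega

lemma gammaLift_neg (k i : ℤ) (hi : i ≤ 0) : gammaLift k i = 0 := if_pos hi

lemma gammaLift_pos (k i : ℤ) (hi : 5 * |k| ≤ i) : gammaLift k i = 5 * k := by
  rcases le_or_gt 0 k with hk | hk
  · rw [abs_of_nonneg hk] at hi
    simp only [gammaLift, abs_of_nonneg hk]
    split_ifs <;> omega
  · rw [abs_of_neg hk] at hi
    simp only [gammaLift, abs_of_neg hk]
    split_ifs <;> omega

lemma gammaC5_eq (k : ℤ) : gammaC5 k = fun i => ((gammaLift k i : ℤ) : ZMod 5) := by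
  funext i
  rcases le_or_gt 0 k with hk | hk
  · simp only [gammaC5, gammaLift, if_pos hk, abs_of_nonneg hk]
    split_ifs with h1 h2
    · simp
    · rfl
    · rw [cast5]
  · have e : 5 * |k| = -(5 * k) := by rw [abs_of_neg hk]; ring
    simp only [gammaC5, gammaLift, if_neg (by omega : ¬ (0:ℤ) ≤ k), e]
    split_ifs with h1 h2
    · simp
    · rfl
    · rw [cast5]

/-- The main homotopy construction: two Lipschitz maps into ℤ with identical
constant tails project to A-homotopic loops in C5. -/
lemma homotopy_of_lifts {F G : ℤ → ℤ} {A B vn vp : ℤ} (hAB : A ≤ B)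
    (hF : Lip F) (hG : Lip G)
    (hneg : ∀ a ≤ A, F a = vn ∧ G a = vn)
    (hpos : ∀ a, B ≤ a → F a = vp ∧ G a = vp) :
    AHomotopicZ C5 (fun a => ((F a : ℤ) : ZMod 5)) (fun a => ((G a : ℤ) : ZMod 5)) := by
  set T : ℤ := 2 * (B - A) with hT
  have hTnn : 0 ≤ T := by omega
  have hbound : ∀ a, G a - F a ≤ T ∧ F a - G a ≤ T := by
    intro a
    rcases le_or_gt a A with h | h
    · have := hneg a h; omega
    rcases le_or_gt B a with h2 | h2
    · have := hpos a h2; omega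
    · have d1 := lip_dist hF A a (by omega)
      have d2 := lip_dist hG A a (by omega)
      have := hneg A le_rfl
      omega
  set r : ℤ × ℤ → ℤ :=
    fun p => max (F p.1 - max 0 (min p.2 T)) (min (G p.1) (F p.1 + max 0 (min p.2 T)))
    with hr
  refine ⟨((vn : ℤ) : ZMod 5), ((vp : ℤ) : ZMod 5),
    fun p => ((r p : ℤ) : ZMod 5), ?_, ⟨A, ?_⟩, ⟨B, ?_⟩, ⟨A, ?_⟩, ⟨B, ?_⟩, ⟨0, ?_⟩, ⟨T, ?_⟩⟩
  · -- grid hom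
    rintro p q ⟨hne, ⟨he, hj⟩ | ⟨he, hj⟩⟩
    · -- vertical: same first coordinate
      obtain ⟨hne2, hc | hc⟩ := hj
      · have hb : r p ≤ r q + 1 ∧ r q ≤ r p + 1 := by
          simp only [hr]
          rw [← he, hc]
          omega
        exact close5 hb.1 hb.2
      · have hb : r p ≤ r q + 1 ∧ r q ≤ r p + 1 := by
          simp only [hr]
          rw [← he, hc]
          omega
        exact close5 hb.1 hb.2
    · -- horizontal
      obtain ⟨hne2, hc | hc⟩ := hj
      · have h1 := hF p.1
        have h2 := hG p.1
        have hb : r p ≤ r q + 1 ∧ r q ≤ r p + 1 := by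
          simp only [hr]
          rw [← he, hc]
          omega
        exact close5 hb.1 hb.2
      · have h1 := hF q.1
        have h2 := hG q.1
        have hb : r p ≤ r q + 1 ∧ r q ≤ r p + 1 := by
          simp only [hr]
          rw [← he, hc]
          omega
        exact close5 hb.1 hb.2
  · -- f, g constant vn below A
    intro i hi
    have := hneg i hi
    constructor <;> simp only [this.1, this.2]
  · intro i hi
    have := hpos i hi
    constructor <;> simp only [this.1, this.2]
  · -- H constant vn for a ≤ A
    intro a ha j
    have h0 := hneg a ha
    show ((r (a, j) : ℤ) : ZMod 5) = _
    have : r (a, j) = vn := by simp only [hr]; omega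
    rw [this]
  · intro a ha j
    have h0 := hpos a ha
    show ((r (a, j) : ℤ) : ZMod 5) = _
    have : r (a, j) = vp := by simp only [hr]; omega
    rw [this]
  · -- H = f for j ≤ 0
    intro j hj a
    show ((r (a, j) : ℤ) : ZMod 5) = _
    have : r (a, j) = F a := by
      simp only [hr]
      have := hbound a
      omega
    rw [this]
  · -- H = g for j ≥ T
    intro j hj a
    show ((r (a, j) : ℤ) : ZMod 5) = _
    have : r (a, j) = G a := by
      simp only [hr]
      have := hbound a
      omega
    rw [this]

end Gamma
section Main

lemma hom_of_lip {F : ℤ → ℤ} (hF : Lip F) :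
    IsGraphHom pathGraphZ C5 (fun a => ((F a : ℤ) : ZMod 5)) := by
  rintro u v ⟨hne, hc | hc⟩
  · subst hc
    have := hF u
    exact close5 (by omega) (by omega)
  · subst hc
    have := hF v
    exact close5 (by omega) (by omega)

lemma gammaC5_hom (p : ℤ) : IsGraphHom pathGraphZ C5 (gammaC5 p) := by
  rw [gammaC5_eq p]
  exact hom_of_lip (gammaLift_lip p)

end Main


/-- The A-homotopy fundamental group of `C₅` is infinite cyclic: `n ↦ [γₙ]`
is a group homomorphism (concatenation corresponds to addition), surjective
(every based loop is A-homotopic to some `γₙ`), and injective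
(`γₙ ∼ γₘ` forces `n = m`). -/
theorem fundamental_group_C5_int :
    (∀ n m : ℤ, AHomotopicZ C5 (concatZ (gammaC5 n) (gammaC5 m) 0 (5 * |m|))
      (gammaC5 (n + m))) ∧
    (∀ f : ℤ → ZMod 5, IsLoopAt C5 0 f → ∃ n : ℤ, AHomotopicZ C5 f (gammaC5 n)) ∧
    (∀ n m : ℤ, AHomotopicZ C5 (gammaC5 n) (gammaC5 m) → n = m) := by
  refine ⟨?_, ?_, ?_⟩
  · -- group law
    intro n m
    have habsn := abs_nonneg n
    have habsm := abs_nonneg m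
    have habsnm := abs_nonneg (n + m)
    set M : ℤ → ℤ :=
      fun a => if 0 ≤ a then 5*m + gammaLift n a else gammaLift m (a + 5*|m|) with hM
    have hM0 : ∀ a : ℤ, 0 ≤ a → M a = 5*m + gammaLift n a := fun a ha => by
      simp only [hM]; rw [if_pos ha]
    have hM1 : ∀ a : ℤ, a < 0 → M a = gammaLift m (a + 5*|m|) := fun a ha => by
      simp only [hM]; rw [if_neg (by omega)]
    have hMlip : Lip M := by
      intro a
      rcases lt_trichotomy a (-1) with h | h | h
      · rw [hM1 a (by omega), hM1 (a+1) (by omega)]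
        have hl := gammaLift_lip m (a + 5*|m|)
        rw [show a + 5*|m| + 1 = a + 1 + 5*|m| from by ring] at hl
        exact hl
      · subst h
        rw [hM1 (-1) (by omega), show (-1 : ℤ) + 1 = 0 from by norm_num, hM0 0 le_rfl,
          gammaLift_neg n 0 le_rfl]
        have hl := gammaLift_lip m (5*|m| - 1)
        rw [show 5*|m| - 1 + 1 = 5*|m| from by ring, gammaLift_pos m (5*|m|) le_rfl] at hl
        rw [show (-1 : ℤ) + 5*|m| = 5*|m| - 1 from by ring]
        omega
      · rw [hM0 a (by omega), hM0 (a+1) (by omega)]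
        have hl := gammaLift_lip n a
        omega
    have hconcat : concatZ (gammaC5 n) (gammaC5 m) 0 (5*|m|)
        = fun a => ((M a : ℤ) : ZMod 5) := by
      funext x
      simp only [concatZ]
      rcases le_or_gt 0 x with h | h
      · rw [if_pos h, hM0 x h, add_zero, gammaC5_eq n, Int.cast_add, cast5, zero_add]
      · rw [if_neg (by omega), hM1 x h, gammaC5_eq m]
    rw [hconcat, gammaC5_eq (n + m)]
    refine homotopy_of_lifts (A := -(5*|m|) - 1) (B := 5*|n| + 5*|n+m| + 5*|m|)
      (vn := 0) (vp := 5*n + 5*m) (by omega) hMlip (gammaLift_lip (n+m)) ?_ ?_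
    · intro x hx
      rw [hM1 x (by omega), gammaLift_neg m _ (by omega), gammaLift_neg (n+m) x (by omega)]
      exact ⟨rfl, rfl⟩
    · intro x hx
      rw [hM0 x (by omega), gammaLift_pos n x (by omega), gammaLift_pos (n+m) x (by omega)]
      exact ⟨by ring, by ring⟩
  · -- surjectivity
    rintro f ⟨hhom, a, b, hstab⟩
    have hflo : ∀ i ≤ a - 1, f i = f (a - 1) := fun i hi => by
      rw [hstab i (Or.inl (by omega)), hstab (a-1) (Or.inl (by omega))]
    have hfa : f (a - 1) = 0 := hstab _ (Or.inl (by omega))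
    have hfhi : ∀ i, b + 1 ≤ i → f i = f (b + 1) := fun i hi => by
      rw [hstab i (Or.inr (by omega)), hstab (b+1) (Or.inr (by omega))]
    have hfb : f (b + 1) = 0 := hstab _ (Or.inr (by omega))
    have hlo : ∀ i ≤ a - 1, liftL f (a-1) i = 0 := liftL_flat_below hflo le_rfl
    have hhi : ∀ i, b + 1 ≤ i → liftL f (a-1) i = liftL f (a-1) (b+1) :=
      liftL_flat_above hfhi
    have hdvd : (5:ℤ) ∣ liftL f (a-1) (b+1) := by
      have hc := liftL_cast hhom (a-1) (b+1)
      rw [hfa, hfb, sub_zero] at hc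
      have h0 := (cast_eq_iff_dvd (liftL f (a-1) (b+1)) 0).mp (by simpa using hc)
      omega
    obtain ⟨n, hn⟩ := hdvd
    have habsn := abs_nonneg n
    refine ⟨n, ?_⟩
    have hfeq : f = fun x => ((liftL f (a-1) x : ℤ) : ZMod 5) := by
      funext x
      rw [liftL_cast hhom (a-1) x, hfa, sub_zero]
    rw [hfeq, gammaC5_eq n]
    refine homotopy_of_lifts (A := min (a-1) 0) (B := max (b+1) (5*|n|))
      (vn := 0) (vp := 5*n) (by omega) (liftL_lip f (a-1)) (gammaLift_lip n) ?_ ?_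
    · intro x hx
      rw [hlo x (by omega), gammaLift_neg n x (by omega)]
      exact ⟨rfl, rfl⟩
    · intro x hx
      rw [hhi x (by omega), hn, gammaLift_pos n x (by omega)]
      exact ⟨rfl, rfl⟩
  · -- injectivity
    rintro n m ⟨vneg, vpos, H, hhom, ⟨m1, h1⟩, ⟨m2, h2⟩, ⟨m3, h3⟩, ⟨m4, h4⟩, ⟨m5, h5⟩, ⟨m6, h6⟩⟩
    have habsn := abs_nonneg n
    have habsm := abs_nonneg m
    have hvneg : vneg = 0 := by
      have h := (h1 (min m1 0) (min_le_left _ _)).1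
      simp only [gammaC5_eq n] at h
      rw [gammaLift_neg n _ (min_le_right _ _)] at h
      simpa using h.symm
    have hvpos : vpos = 0 := by
      have h := (h2 (max m2 (5*|n|)) (le_max_left _ _)).1
      simp only [gammaC5_eq n] at h
      rw [gammaLift_pos n _ (le_max_right _ _), cast5] at h
      exact h.symm
    set A : ℤ := min m3 0 with hA
    set B : ℤ := max m4 (max (5*|n|) (5*|m|)) with hB
    have hA0 : A ≤ 0 := min_le_right _ _
    have hBn : 5*|n| ≤ B := le_trans (le_max_left _ _) (le_max_right _ _)
    have hBm : 5*|m| ≤ B := le_trans (le_max_right _ _) (le_max_right _ _)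
    have hrowhom : ∀ j : ℤ, IsGraphHom pathGraphZ C5 (fun x => H (x, j)) := by
      intro j u v huv
      exact hhom (u := (u, j)) (v := (v, j))
        ⟨fun hc => huv.1 (congrArg Prod.fst hc), Or.inr ⟨rfl, huv⟩⟩
    have hrowA : ∀ j : ℤ, H (A, j) = 0 := fun j => by
      rw [h3 A (min_le_left _ _) j, hvneg]
    have hrowB : ∀ j : ℤ, H (B, j) = 0 := fun j => by
      rw [h4 B (le_max_left _ _) j, hvpos]
    have hLcast : ∀ j x : ℤ, ((liftL (fun x => H (x, j)) A x : ℤ) : ZMod 5) = H (x, j) := by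
      intro j x
      rw [liftL_cast (hrowhom j) A x]
      rw [hrowA j, sub_zero]
    have hLB : ∀ j : ℤ, (5:ℤ) ∣ liftL (fun x => H (x, j)) A B := by
      intro j
      have hc := hLcast j B
      rw [hrowB j] at hc
      have h0 := (cast_eq_iff_dvd (liftL (fun x => H (x, j)) A B) 0).mp (by simpa using hc)
      omega
    have hstep : ∀ j : ℤ,
        liftL (fun x => H (x, j+1)) A B = liftL (fun x => H (x, j)) A B := by
      intro j
      have hclose : ∀ x : ℤ, ∃ e : ℤ, -1 ≤ e ∧ e ≤ 1 ∧
          (5:ℤ) ∣ (liftL (fun x => H (x, j+1)) A x - liftL (fun x => H (x, j)) A x - e) := by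
        intro x
        have hadj := hhom (u := ((x, j) : ℤ × ℤ)) (v := (x, j+1))
          ⟨fun hc => by simpa using congrArg Prod.snd hc,
            Or.inl ⟨rfl, ⟨by omega, Or.inl rfl⟩⟩⟩
        rcases hadj with heq | ⟨hne, hc | hc⟩
        · refine ⟨0, by omega, by omega, ?_⟩
          have hcc : ((liftL (fun x => H (x, j)) A x : ℤ) : ZMod 5)
              = ((liftL (fun x => H (x, j+1)) A x : ℤ) : ZMod 5) := by
            rw [hLcast j x, hLcast (j+1) x]; exact heq
          have := (cast_eq_iff_dvd _ _).mp hcc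
          omega
        · refine ⟨-1, by omega, by omega, ?_⟩
          have hcc : ((liftL (fun x => H (x, j)) A x : ℤ) : ZMod 5)
              = ((liftL (fun x => H (x, j+1)) A x + 1 : ℤ) : ZMod 5) := by
            push_cast
            rw [hLcast j x, hLcast (j+1) x]; exact hc
          have := (cast_eq_iff_dvd _ _).mp hcc
          omega
        · refine ⟨1, by omega, by omega, ?_⟩
          have hcc : ((liftL (fun x => H (x, j)) A x + 1 : ℤ) : ZMod 5)
              = ((liftL (fun x => H (x, j+1)) A x : ℤ) : ZMod 5) := by
            push_cast
            rw [hLcast j x, hLcast (j+1) x]; exact hc.symm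
          have := (cast_eq_iff_dvd _ _).mp hcc
          omega
      have hbd := lift_close (liftL_lip _ A) (liftL_lip _ A) A
        (by rw [liftL_base, liftL_base]) hclose B
      have d1 := hLB j
      have d2 := hLB (j+1)
      omega
    have hconst : ∀ j j' : ℤ,
        liftL (fun x => H (x, j)) A B = liftL (fun x => H (x, j')) A B := by
      intro j j'
      induction j using Int.inductionOn' (b := j') with
      | zero => rfl
      | succ k _ ih => rw [hstep k]; exact ih
      | pred k _ ih =>
          have h := hstep (k-1)
          rw [show k - 1 + 1 = k from by omega] at h
          rw [← h]; exact ih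
    have hgamma : ∀ p x : ℤ, liftL (gammaC5 p) A x = gammaLift p x := by
      intro p
      refine lift_unique (liftL_lip _ A) (gammaLift_lip p) A ?_ ?_
      · rw [liftL_base, gammaLift_neg p A hA0]
      · intro x
        have hc := liftL_cast (gammaC5_hom p) A x
        have hval : gammaC5 p A = 0 := by
          simp only [gammaC5_eq p]
          rw [gammaLift_neg p A hA0]; simp
        rw [hval, sub_zero] at hc
        have hc2 : ((liftL (gammaC5 p) A x : ℤ) : ZMod 5)
            = ((gammaLift p x : ℤ) : ZMod 5) := by
          rw [hc]
          simp only [gammaC5_eq p]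
        exact (cast_eq_iff_dvd _ _).mp hc2
    have hrow5 : (fun x => H (x, min m5 m6)) = gammaC5 n :=
      funext fun x => h5 _ (min_le_left _ _) x
    have hrow6 : (fun x => H (x, max m5 m6)) = gammaC5 m :=
      funext fun x => h6 _ (le_max_right _ _) x
    have e1 : liftL (fun x => H (x, min m5 m6)) A B = 5*n := by
      rw [hrow5, hgamma n B, gammaLift_pos n B hBn]
    have e2 : liftL (fun x => H (x, max m5 m6)) A B = 5*m := by
      rw [hrow6, hgamma m B, gammaLift_pos m B hBm]
    have := hconst (min m5 m6) (max m5 m6)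
    rw [e1, e2] at this
    omega
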